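/- Observed improvement implies true improvement. Assume the hypotheses under which IR1 = 1 − VE1ch (Consistency, Exposure necessity, Blinding, Treatment exchangeability, Positivity, Exposure exchangeability, P(E1[0]=1) > 0, E[Y1[0,1]] > 0, E[ΔY1 | A=0] > 0) and the hypotheses under which IR2 ≥ 1 − VE2ch (additionally the Exclusion restriction, Extended exposure exchangeability, P(E1[a]=1, Y1[a,1]=0) > 0, sharp no waning of the placebo, E[ΔY2 | A=0] > 0 and E[Y2[0,1]] > 0). Then IR2 < IR1 implies VE2ch > VE1ch: if the observed incidence ratio decreases from interval 1 to interval 2, the challenge vaccine efficacy has truly increased. -/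

import Mathlib

open MeasureTheory ProbabilityTheory
open scoped ProbabilityTheory

lemma indic_integral {Ω : Type*} [MeasurableSpace Ω] (μ : Measure Ω) [IsFiniteMeasure μ]
    {f : Ω → ℝ} (hm : Measurable f) (hr : ∀ ω, f ω = 0 ∨ f ω = 1) :
    ∫ ω, f ω ∂μ = (μ {ω | f ω = 1}).toReal := by
  have hset : MeasurableSet {ω | f ω = 1} := hm (measurableSet_singleton 1)
  have hf : f = Set.indicator {ω | f ω = 1} (fun _ => (1:ℝ)) := by
    funext ω
    rcases hr ω with h | h
    · simp only [Set.indicator, Set.mem_setOf_eq, h]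
      norm_num
    · simp [Set.indicator, h]
  rw [hf, integral_indicator_const (1:ℝ) hset]
  simp
  rfl

lemma cond_indic_integral {Ω : Type*} [MeasurableSpace Ω] (μ : Measure Ω) [IsFiniteMeasure μ]
    {s : Set Ω} (hs : MeasurableSet s) {f : Ω → ℝ} (hm : Measurable f)
    (hr : ∀ ω, f ω = 0 ∨ f ω = 1) :
    ∫ ω, f ω ∂(μ[|s]) = ((μ s)⁻¹).toReal * (μ (s ∩ {ω | f ω = 1})).toReal := by
  have hset : MeasurableSet {ω | f ω = 1} := hm (measurableSet_singleton 1)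
  rw [ProbabilityTheory.cond, integral_smul_measure, indic_integral _ hm hr,
    Measure.restrict_apply hset, smul_eq_mul, Set.inter_comm]

lemma factor3 {Ω : Type*} [MeasurableSpace Ω] (μ : Measure Ω) [IsProbabilityMeasure μ]
    {X Z W : Ω → ℝ} (hZ : Measurable Z)
    (hind1 : IndepFun X W (μ[|{ω | Z ω = 1}]))
    (hind2 : IndepFun Z W μ) :
    μ ({ω | X ω = 0} ∩ {ω | Z ω = 1} ∩ {ω | W ω = 1})
      = μ ({ω | X ω = 0} ∩ {ω | Z ω = 1}) * μ {ω | W ω = 1} := by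
  set s : Set Ω := {ω | Z ω = 1} with hs_def
  have hs : MeasurableSet s := hZ (measurableSet_singleton 1)
  by_cases hq : μ s = 0
  · have l1 : μ ({ω | X ω = 0} ∩ s ∩ {ω | W ω = 1}) = 0 :=
      measure_mono_null (fun ω hω => hω.1.2) hq
    have l2 : μ ({ω | X ω = 0} ∩ s) = 0 :=
      measure_mono_null (fun ω hω => hω.2) hq
    rw [l1, l2, zero_mul]
  · have hqt : μ s ≠ ⊤ := measure_ne_top μ s
    have hcond := hind1.measure_inter_preimage_eq_mul (s := {0}) (t := {1})
      (measurableSet_singleton 0) (measurableSet_singleton 1)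
    have hcond' : μ[|s] ({ω | X ω = 0} ∩ {ω | W ω = 1})
        = μ[|s] {ω | X ω = 0} * μ[|s] {ω | W ω = 1} := hcond
    rw [cond_apply hs μ, cond_apply hs μ, cond_apply hs μ] at hcond'
    have h2 : μ (s ∩ {ω | W ω = 1}) = μ s * μ {ω | W ω = 1} := by
      have := hind2.measure_inter_preimage_eq_mul (s := {1}) (t := {1})
        (measurableSet_singleton 1) (measurableSet_singleton 1)
      exact this
    rw [h2] at hcond'
    have hset : {ω | X ω = 0} ∩ s ∩ {ω | W ω = 1} = s ∩ ({ω | X ω = 0} ∩ {ω | W ω = 1}) := by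
      rw [Set.inter_comm {ω | X ω = 0} s, Set.inter_assoc]
    have hset2 : {ω | X ω = 0} ∩ s = s ∩ {ω | X ω = 0} := Set.inter_comm _ _
    rw [hset, hset2]
    have hinv0 : (μ s)⁻¹ ≠ 0 := ENNReal.inv_ne_zero.mpr hqt
    have hinvt : (μ s)⁻¹ ≠ ⊤ := ENNReal.inv_ne_top.mpr hq
    refine (ENNReal.mul_left_strictMono hinv0 hinvt).injective ?_
    rw [mul_comm _ (μ s)⁻¹, mul_comm _ (μ s)⁻¹]
    show (μ s)⁻¹ * _ = (μ s)⁻¹ * _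
    rw [hcond']
    have : (μ s)⁻¹ * (μ s * μ {ω | W ω = 1}) = μ {ω | W ω = 1} := by
      rw [← mul_assoc, ENNReal.inv_mul_cancel hq hqt, one_mul]
    rw [this]
    ring
/-- Observed improvement implies true improvement: IR2 < IR1 implies VE2ch > VE1ch. -/
theorem observed_improvement_implies_true_improvement
    {Ω : Type*} [MeasurableSpace Ω] (μ : Measure Ω) [IsProbabilityMeasure μ]
    (A E1 E2 DY1 DY2 : Ω → ℝ)
    (E1p : ℝ → Ω → ℝ) (E2p Y1p Y2p Wp : ℝ → ℝ → Ω → ℝ)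
    (hAm : Measurable A) (hE1m : Measurable E1) (hE2m : Measurable E2)
    (hDY1m : Measurable DY1) (hDY2m : Measurable DY2)
    (hE1pm : ∀ a ∈ ({0, 1} : Set ℝ), Measurable (E1p a))
    (hE2pm : ∀ a ∈ ({0, 1} : Set ℝ), ∀ e1 ∈ ({0, 1} : Set ℝ), Measurable (E2p a e1))
    (hY1pm : ∀ a ∈ ({0, 1} : Set ℝ), ∀ e1 ∈ ({0, 1} : Set ℝ), Measurable (Y1p a e1))
    (hY2pm : ∀ a ∈ ({0, 1} : Set ℝ), ∀ e2 ∈ ({0, 1} : Set ℝ), Measurable (Y2p a e2))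
    (hWpm : ∀ a ∈ ({0, 1} : Set ℝ), ∀ e1 ∈ ({0, 1} : Set ℝ), Measurable (Wp a e1))
    (hAr : ∀ ω, A ω = 0 ∨ A ω = 1) (hE1r : ∀ ω, E1 ω = 0 ∨ E1 ω = 1)
    (hE2r : ∀ ω, E2 ω = 0 ∨ E2 ω = 1)
    (hDY1r : ∀ ω, DY1 ω = 0 ∨ DY1 ω = 1) (hDY2r : ∀ ω, DY2 ω = 0 ∨ DY2 ω = 1)
    (hE1pr : ∀ a ∈ ({0, 1} : Set ℝ), ∀ ω, E1p a ω = 0 ∨ E1p a ω = 1)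
    (hE2pr : ∀ a ∈ ({0, 1} : Set ℝ), ∀ e1 ∈ ({0, 1} : Set ℝ), ∀ ω,
      E2p a e1 ω = 0 ∨ E2p a e1 ω = 1)
    (hY1pr : ∀ a ∈ ({0, 1} : Set ℝ), ∀ e1 ∈ ({0, 1} : Set ℝ), ∀ ω,
      Y1p a e1 ω = 0 ∨ Y1p a e1 ω = 1)
    (hY2pr : ∀ a ∈ ({0, 1} : Set ℝ), ∀ e2 ∈ ({0, 1} : Set ℝ), ∀ ω,
      Y2p a e2 ω = 0 ∨ Y2p a e2 ω = 1)
    (hWpr : ∀ a ∈ ({0, 1} : Set ℝ), ∀ e1 ∈ ({0, 1} : Set ℝ), ∀ ω,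
      Wp a e1 ω = 0 ∨ Wp a e1 ω = 1)
    (hmono : ∀ ω, DY1 ω = 1 → DY2 ω = 0)
    -- Consistency
    (hconsE1 : ∀ a ∈ ({0, 1} : Set ℝ), ∀ᵐ ω ∂μ, A ω = a → E1 ω = E1p a ω)
    (hconsY1 : ∀ a ∈ ({0, 1} : Set ℝ), ∀ e1 ∈ ({0, 1} : Set ℝ),
      ∀ᵐ ω ∂μ, A ω = a → E1 ω = e1 → DY1 ω = Y1p a e1 ω)
    (hconsE2 : ∀ a ∈ ({0, 1} : Set ℝ), ∀ e1 ∈ ({0, 1} : Set ℝ),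
      ∀ᵐ ω ∂μ, A ω = a → E1 ω = e1 → E2 ω = E2p a e1 ω)
    (hconsY2 : ∀ a ∈ ({0, 1} : Set ℝ), ∀ e2 ∈ ({0, 1} : Set ℝ),
      ∀ᵐ ω ∂μ, A ω = a → E1 ω = 0 → E2 ω = e2 → DY2 ω = Y2p a e2 ω)
    (hconsW : ∀ a ∈ ({0, 1} : Set ℝ), ∀ e1 ∈ ({0, 1} : Set ℝ),
      ∀ᵐ ω ∂μ, A ω = a → E1 ω = e1 → DY1 ω = 0 → E2 ω = 1 → DY2 ω = Wp a e1 ω)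
    -- Exposure necessity
    (hnecY1 : ∀ a ∈ ({0, 1} : Set ℝ), ∀ᵐ ω ∂μ, Y1p a 0 ω = 0)
    (hnecY2 : ∀ a ∈ ({0, 1} : Set ℝ), ∀ᵐ ω ∂μ, Y2p a 0 ω = 0)
    (hnecE2 : ∀ᵐ ω ∂μ, E2 ω = 0 → DY2 ω = 0)
    -- Exclusion restriction
    (hexcl : ∀ a ∈ ({0, 1} : Set ℝ), ∀ᵐ ω ∂μ, Wp a 1 ω = Y2p a 1 ω ∧ Wp a 0 ω = Y2p a 1 ω)
    -- Blinding
    (hblind1 : ∀ᵐ ω ∂μ, E1p 0 ω = E1p 1 ω)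
    (hblind2 : ∀ᵐ ω ∂μ, E2p 0 0 ω = E2p 1 0 ω)
    -- Treatment exchangeability
    (hexch : IndepFun A (fun ω => ![E1p 0 ω, E1p 1 ω,
      E2p 0 0 ω, E2p 0 1 ω, E2p 1 0 ω, E2p 1 1 ω,
      Y1p 0 0 ω, Y1p 0 1 ω, Y1p 1 0 ω, Y1p 1 1 ω,
      Y2p 0 0 ω, Y2p 0 1 ω, Y2p 1 0 ω, Y2p 1 1 ω,
      Wp 0 0 ω, Wp 0 1 ω, Wp 1 0 ω, Wp 1 1 ω]) μ)
    -- Positivity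
    (hpos : 0 < (μ {ω | A ω = 1}).toReal ∧ (μ {ω | A ω = 1}).toReal < 1)
    -- Exposure exchangeability
    (heeY1 : ∀ a ∈ ({0, 1} : Set ℝ), ∀ e1 ∈ ({0, 1} : Set ℝ), IndepFun (E1p a) (Y1p a e1) μ)
    (heeY2cond : ∀ a ∈ ({0, 1} : Set ℝ), ∀ e2 ∈ ({0, 1} : Set ℝ), ∀ e ∈ ({0, 1} : Set ℝ),
      IndepFun (E1p a) (Y2p a e2) (μ[|{ω | E2p a 0 ω = e}]))
    (heeE2 : ∀ a ∈ ({0, 1} : Set ℝ), ∀ e2 ∈ ({0, 1} : Set ℝ), IndepFun (E2p a 0) (Y2p a e2) μ)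
    -- Extended exposure exchangeability
    (hextee1 : ∀ a ∈ ({0, 1} : Set ℝ), ∀ e ∈ ({0, 1} : Set ℝ),
      IndepFun (E1p a) (Wp a 1) (μ[|{ω | Y1p a 1 ω = 0 ∧ E2p a 1 ω = e}]))
    (hextee2 : ∀ a ∈ ({0, 1} : Set ℝ),
      IndepFun (E2p a 1) (Wp a 1) (μ[|{ω | Y1p a 1 ω = 0}]))
    -- Nondegeneracy (for both arms)
    (hE1pos : ∀ a ∈ ({0, 1} : Set ℝ), 0 < (μ {ω | E1p a ω = 1}).toReal)
    (hE1lt : ∀ a ∈ ({0, 1} : Set ℝ), (μ {ω | E1p a ω = 1}).toReal < 1)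
    (hE1Y1 : ∀ a ∈ ({0, 1} : Set ℝ), 0 < (μ {ω | E1p a ω = 1 ∧ Y1p a 1 ω = 0}).toReal)
    -- Sharp no waning of the placebo
    (hnull0 : ∀ᵐ ω ∂μ, Y1p 0 1 ω = Y2p 0 1 ω)
    (hd4 : 0 < ∫ ω, Y1p 0 1 ω ∂μ)
    (hd1 : 0 < ∫ ω, DY1 ω ∂(μ[|{ω | A ω = 0}]))
    (hd2 : 0 < ∫ ω, DY2 ω ∂(μ[|{ω | A ω = 0}]))
    (hd5 : 0 < ∫ ω, Y2p 0 1 ω ∂μ) :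
    (∫ ω, DY2 ω ∂(μ[|{ω | A ω = 1}])) / (∫ ω, DY2 ω ∂(μ[|{ω | A ω = 0}])) <
        (∫ ω, DY1 ω ∂(μ[|{ω | A ω = 1}])) / (∫ ω, DY1 ω ∂(μ[|{ω | A ω = 0}])) →
      1 - (∫ ω, Y2p 1 1 ω ∂μ) / (∫ ω, Y2p 0 1 ω ∂μ) >
        1 - (∫ ω, Y1p 1 1 ω ∂μ) / (∫ ω, Y1p 0 1 ω ∂μ) := by
  have h0m : (0:ℝ) ∈ ({0,1} : Set ℝ) := by norm_num
  have h1m : (1:ℝ) ∈ ({0,1} : Set ℝ) := by norm_num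
  have hme : ∀ (i : Fin 18) (c : ℝ),
      MeasurableSet ((fun v : Fin 18 → ℝ => v i) ⁻¹' {c}) :=
    fun i c => (measurable_pi_apply i) (measurableSet_singleton c)
  -- arm measures
  have hA0c : {ω | A ω = 0} = {ω | A ω = 1}ᶜ := by
    ext ω
    simp only [Set.mem_setOf_eq, Set.mem_compl_iff]
    rcases hAr ω with h | h <;> rw [h] <;> norm_num
  have hA1ne0 : μ {ω | A ω = 1} ≠ 0 := by
    intro h
    rw [h] at hpos
    simp at hpos
  have hA1lt1 : μ {ω | A ω = 1} < 1 := by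
    have := hpos.2
    rw [show (1:ℝ) = (1:ENNReal).toReal by simp] at this
    exact (ENNReal.toReal_lt_toReal (measure_ne_top μ _) (by simp)).mp this
  have hA0ne0 : μ {ω | A ω = 0} ≠ 0 := by
    have hsA : MeasurableSet {ω | A ω = 1} := hAm (measurableSet_singleton 1)
    rw [hA0c, prob_compl_eq_one_sub hsA]
    intro h
    rw [tsub_eq_zero_iff_le] at h
    exact absurd h (not_le.mpr hA1lt1)
  -- First-period arm computation
  have harm1 : ∀ a ∈ ({0,1} : Set ℝ), μ {ω | A ω = a} ≠ 0 →
      ∫ ω, DY1 ω ∂(μ[|{ω | A ω = a}])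
        = (μ {ω | E1p a ω = 1}).toReal * (μ {ω | Y1p a 1 ω = 1}).toReal := by
    intro a ha hane
    have hAa : MeasurableSet {ω | A ω = a} := hAm (measurableSet_singleton a)
    rw [cond_indic_integral μ hAa hDY1m hDY1r]
    have hae : μ ({ω | A ω = a} ∩ {ω | DY1 ω = 1})
        = μ ({ω | A ω = a} ∩ ({ω | E1p a ω = 1} ∩ {ω | Y1p a 1 ω = 1})) := by
      apply measure_congr
      rw [Filter.eventuallyEq_set]
      filter_upwards [hconsE1 a ha, hconsY1 a ha 0 h0m, hconsY1 a ha 1 h1m, hnecY1 a ha]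
        with ω h1 h2 h3 h4
      simp only [Set.mem_inter_iff, Set.mem_setOf_eq]
      constructor
      · rintro ⟨hA, hD⟩
        rcases hE1r ω with hE | hE
        · exfalso
          rw [h2 hA hE, h4] at hD
          norm_num at hD
        · refine ⟨hA, ?_, ?_⟩
          · rw [← h1 hA]; exact hE
          · rw [← h3 hA hE]; exact hD
      · rintro ⟨hA, hE1, hY⟩
        have hE : E1 ω = 1 := by rw [h1 hA]; exact hE1
        exact ⟨hA, by rw [h3 hA hE]; exact hY⟩
    have hprod : μ ({ω | A ω = a} ∩ ({ω | E1p a ω = 1} ∩ {ω | Y1p a 1 ω = 1}))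
        = μ {ω | A ω = a} * μ ({ω | E1p a ω = 1} ∩ {ω | Y1p a 1 ω = 1}) := by
      have ha' : a = 0 ∨ a = 1 := by simpa using ha
      rcases ha' with rfl | rfl
      · exact hexch.measure_inter_preimage_eq_mul (s := {0})
          (t := (fun v : Fin 18 → ℝ => v 0) ⁻¹' {1} ∩ (fun v : Fin 18 → ℝ => v 7) ⁻¹' {1})
          (measurableSet_singleton 0) ((hme 0 1).inter (hme 7 1))
      · exact hexch.measure_inter_preimage_eq_mul (s := {1})
          (t := (fun v : Fin 18 → ℝ => v 1) ⁻¹' {1} ∩ (fun v : Fin 18 → ℝ => v 9) ⁻¹' {1})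
          (measurableSet_singleton 1) ((hme 1 1).inter (hme 9 1))
    have hee : μ ({ω | E1p a ω = 1} ∩ {ω | Y1p a 1 ω = 1})
        = μ {ω | E1p a ω = 1} * μ {ω | Y1p a 1 ω = 1} :=
      (heeY1 a ha 1 h1m).measure_inter_preimage_eq_mul (s := {1}) (t := {1})
        (measurableSet_singleton 1) (measurableSet_singleton 1)
    rw [hae, hprod, ENNReal.toReal_mul, ENNReal.toReal_inv,
      inv_mul_cancel_left₀ (ENNReal.toReal_ne_zero.mpr ⟨hane, measure_ne_top μ _⟩),
      hee, ENNReal.toReal_mul]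
  -- Second-period arm computation
  have harm2 : ∀ a ∈ ({0,1} : Set ℝ), μ {ω | A ω = a} ≠ 0 →
      ∫ ω, DY2 ω ∂(μ[|{ω | A ω = a}])
        = (μ ({ω | E1p a ω = 0} ∩ {ω | E2p a 0 ω = 1})).toReal
            * (μ {ω | Y2p a 1 ω = 1}).toReal
          + (μ ({ω | E1p a ω = 1} ∩ {ω | Y1p a 1 ω = 0} ∩ {ω | E2p a 1 ω = 1}
              ∩ {ω | Y2p a 1 ω = 1})).toReal := by
    intro a ha hane
    have hAa : MeasurableSet {ω | A ω = a} := hAm (measurableSet_singleton a)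
    rw [cond_indic_integral μ hAa hDY2m hDY2r]
    set B0 : Set Ω := {ω | E1p a ω = 0} ∩ {ω | E2p a 0 ω = 1} ∩ {ω | Y2p a 1 ω = 1}
      with hB0def
    set B1 : Set Ω := {ω | E1p a ω = 1} ∩ {ω | Y1p a 1 ω = 0} ∩ {ω | E2p a 1 ω = 1}
      ∩ {ω | Y2p a 1 ω = 1} with hB1def
    have hae : μ ({ω | A ω = a} ∩ {ω | DY2 ω = 1}) = μ ({ω | A ω = a} ∩ (B0 ∪ B1)) := by
      apply measure_congr
      rw [Filter.eventuallyEq_set]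
      filter_upwards [hconsE1 a ha, hconsY1 a ha 1 h1m, hconsE2 a ha 0 h0m,
        hconsE2 a ha 1 h1m, hconsY2 a ha 1 h1m, hconsW a ha 1 h1m, hnecE2, hexcl a ha]
        with ω h1 h3 hc20 hc21 hcy2 hw hne hex
      simp only [hB0def, hB1def, Set.mem_inter_iff, Set.mem_setOf_eq, Set.mem_union]
      constructor
      · rintro ⟨hA, hD⟩
        refine ⟨hA, ?_⟩
        have hE2 : E2 ω = 1 := by
          rcases hE2r ω with h | h
          · exfalso; rw [hne h] at hD; norm_num at hD
          · exact h
        rcases hE1r ω with hE | hE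
        · left
          refine ⟨⟨?_, ?_⟩, ?_⟩
          · rw [← h1 hA]; exact hE
          · rw [← hc20 hA hE]; exact hE2
          · rw [← hcy2 hA hE hE2]; exact hD
        · right
          have hD1 : DY1 ω = 0 := by
            rcases hDY1r ω with h | h
            · exact h
            · exfalso; rw [hmono ω h] at hD; norm_num at hD
          refine ⟨⟨⟨?_, ?_⟩, ?_⟩, ?_⟩
          · rw [← h1 hA]; exact hE
          · rw [← h3 hA hE]; exact hD1
          · rw [← hc21 hA hE]; exact hE2
          · rw [← hex.1, ← hw hA hE hD1 hE2]; exact hD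
      · rintro ⟨hA, hB0 | hB1⟩
        · obtain ⟨⟨hE1, hE2⟩, hY2⟩ := hB0
          have hE : E1 ω = 0 := by rw [h1 hA]; exact hE1
          have hE2' : E2 ω = 1 := by rw [hc20 hA hE]; exact hE2
          exact ⟨hA, by rw [hcy2 hA hE hE2']; exact hY2⟩
        · obtain ⟨⟨⟨hE1, hY1⟩, hE2⟩, hY2⟩ := hB1
          have hE : E1 ω = 1 := by rw [h1 hA]; exact hE1
          have hD1 : DY1 ω = 0 := by rw [h3 hA hE]; exact hY1
          have hE2' : E2 ω = 1 := by rw [hc21 hA hE]; exact hE2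
          exact ⟨hA, by rw [hw hA hE hD1 hE2', hex.1]; exact hY2⟩
    have hprod : μ ({ω | A ω = a} ∩ (B0 ∪ B1)) = μ {ω | A ω = a} * μ (B0 ∪ B1) := by
      have ha' : a = 0 ∨ a = 1 := by simpa using ha
      rcases ha' with rfl | rfl
      · exact hexch.measure_inter_preimage_eq_mul (s := {0})
          (t := ((fun v : Fin 18 → ℝ => v 0) ⁻¹' {0} ∩ (fun v : Fin 18 → ℝ => v 2) ⁻¹' {1}
              ∩ (fun v : Fin 18 → ℝ => v 11) ⁻¹' {1})
            ∪ ((fun v : Fin 18 → ℝ => v 0) ⁻¹' {1} ∩ (fun v : Fin 18 → ℝ => v 7) ⁻¹' {0}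
              ∩ (fun v : Fin 18 → ℝ => v 3) ⁻¹' {1} ∩ (fun v : Fin 18 → ℝ => v 11) ⁻¹' {1}))
          (measurableSet_singleton 0)
          ((((hme 0 0).inter (hme 2 1)).inter (hme 11 1)).union
            ((((hme 0 1).inter (hme 7 0)).inter (hme 3 1)).inter (hme 11 1)))
      · exact hexch.measure_inter_preimage_eq_mul (s := {1})
          (t := ((fun v : Fin 18 → ℝ => v 1) ⁻¹' {0} ∩ (fun v : Fin 18 → ℝ => v 4) ⁻¹' {1}
              ∩ (fun v : Fin 18 → ℝ => v 13) ⁻¹' {1})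
            ∪ ((fun v : Fin 18 → ℝ => v 1) ⁻¹' {1} ∩ (fun v : Fin 18 → ℝ => v 9) ⁻¹' {0}
              ∩ (fun v : Fin 18 → ℝ => v 5) ⁻¹' {1} ∩ (fun v : Fin 18 → ℝ => v 13) ⁻¹' {1}))
          (measurableSet_singleton 1)
          ((((hme 1 0).inter (hme 4 1)).inter (hme 13 1)).union
            ((((hme 1 1).inter (hme 9 0)).inter (hme 5 1)).inter (hme 13 1)))
    have hdisj : Disjoint B0 B1 := by
      rw [Set.disjoint_left]
      rintro ω ⟨⟨h0, _⟩, _⟩ ⟨⟨⟨h1', _⟩, _⟩, _⟩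
      simp only [Set.mem_setOf_eq] at h0 h1'
      rw [h0] at h1'
      norm_num at h1'
    have hB1meas : MeasurableSet B1 :=
      ((((hE1pm a ha (measurableSet_singleton 1)).inter
          (hY1pm a ha 1 h1m (measurableSet_singleton 0))).inter
          (hE2pm a ha 1 h1m (measurableSet_singleton 1))).inter
          (hY2pm a ha 1 h1m (measurableSet_singleton 1)))
    have hunion : μ (B0 ∪ B1) = μ B0 + μ B1 := measure_union hdisj hB1meas
    have hfact : μ B0 = μ ({ω | E1p a ω = 0} ∩ {ω | E2p a 0 ω = 1}) * μ {ω | Y2p a 1 ω = 1} :=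
      factor3 μ (hE2pm a ha 0 h0m) (heeY2cond a ha 1 h1m 1 h1m) (heeE2 a ha 1 h1m)
    rw [hae, hprod, ENNReal.toReal_mul, ENNReal.toReal_inv,
      inv_mul_cancel_left₀ (ENNReal.toReal_ne_zero.mpr ⟨hane, measure_ne_top μ _⟩),
      hunion, ENNReal.toReal_add (measure_ne_top μ _) (measure_ne_top μ _),
      hfact, ENNReal.toReal_mul]
  -- blinding consequences
  have heeq : μ {ω | E1p 1 ω = 1} = μ {ω | E1p 0 ω = 1} := by
    apply measure_congr
    rw [Filter.eventuallyEq_set]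
    filter_upwards [hblind1] with ω hb
    simp only [Set.mem_setOf_eq, hb]
  have hqeq : μ ({ω | E1p 1 ω = 0} ∩ {ω | E2p 1 0 ω = 1})
      = μ ({ω | E1p 0 ω = 0} ∩ {ω | E2p 0 0 ω = 1}) := by
    apply measure_congr
    rw [Filter.eventuallyEq_set]
    filter_upwards [hblind1, hblind2] with ω hb1 hb2
    simp only [Set.mem_inter_iff, Set.mem_setOf_eq, hb1, hb2]
  -- sharp no waning kills the placebo second-stratum term
  have hB10 : μ ({ω | E1p 0 ω = 1} ∩ {ω | Y1p 0 1 ω = 0} ∩ {ω | E2p 0 1 ω = 1}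
      ∩ {ω | Y2p 0 1 ω = 1}) = 0 := by
    have hnull : μ {ω | ¬ (Y1p 0 1 ω = Y2p 0 1 ω)} = 0 := by
      rw [← ae_iff]
      exact hnull0
    apply measure_mono_null _ hnull
    rintro ω ⟨⟨⟨_, hY1⟩, _⟩, hY2⟩
    simp only [Set.mem_setOf_eq] at *
    rw [hY1, hY2]
    norm_num
  -- rewrite everything
  rw [harm1 0 h0m hA0ne0, harm1 1 h1m hA1ne0, harm2 0 h0m hA0ne0, harm2 1 h1m hA1ne0,
    heeq, hqeq, hB10,
    indic_integral μ (hY1pm 0 h0m 1 h1m) (hY1pr 0 h0m 1 h1m),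
    indic_integral μ (hY1pm 1 h1m 1 h1m) (hY1pr 1 h1m 1 h1m),
    indic_integral μ (hY2pm 0 h0m 1 h1m) (hY2pr 0 h0m 1 h1m),
    indic_integral μ (hY2pm 1 h1m 1 h1m) (hY2pr 1 h1m 1 h1m)]
  rw [indic_integral μ (hY1pm 0 h0m 1 h1m) (hY1pr 0 h0m 1 h1m)] at hd4
  rw [indic_integral μ (hY2pm 0 h0m 1 h1m) (hY2pr 0 h0m 1 h1m)] at hd5
  rw [harm1 0 h0m hA0ne0] at hd1
  rw [harm2 0 h0m hA0ne0, hB10] at hd2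
  set e : ℝ := (μ {ω | E1p 0 ω = 1}).toReal
  set m0 : ℝ := (μ {ω | Y1p 0 1 ω = 1}).toReal
  set m1 : ℝ := (μ {ω | Y1p 1 1 ω = 1}).toReal
  set q : ℝ := (μ ({ω | E1p 0 ω = 0} ∩ {ω | E2p 0 0 ω = 1})).toReal
  set m0' : ℝ := (μ {ω | Y2p 0 1 ω = 1}).toReal
  set m1' : ℝ := (μ {ω | Y2p 1 1 ω = 1}).toReal
  set b : ℝ := (μ ({ω | E1p 1 ω = 1} ∩ {ω | Y1p 1 1 ω = 0} ∩ {ω | E2p 1 1 ω = 1}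
      ∩ {ω | Y2p 1 1 ω = 1})).toReal
  intro hlt
  simp only [ENNReal.toReal_zero, add_zero] at hlt hd2
  have hb : (0:ℝ) ≤ b := ENNReal.toReal_nonneg
  have hqm : 0 < q * m0' := hd2
  have hq : 0 < q := by
    by_contra h
    push_neg at h
    nlinarith [hd5]
  have he : 0 < e := by
    by_contra h
    push_neg at h
    nlinarith [hd4]
  have e1 : (e * m1) / (e * m0) = m1 / m0 := mul_div_mul_left _ _ (ne_of_gt he)
  have e2 : (q * m1') / (q * m0') = m1' / m0' := mul_div_mul_left _ _ (ne_of_gt hq)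
  have h5 : (q * m1') / (q * m0') ≤ (q * m1' + b) / (q * m0') := by
    exact (div_le_div_iff_of_pos_right hqm).mpr (by linarith)
  have key : m1' / m0' < m1 / m0 := by linarith
  linarith
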